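/- Let X and Y be finite, nonempty, disjoint subsets of ℝ^D, let p > 1, set δ = min{κ(Y), d_E(X,Y)}, and let 0 < ε < δ^p. Then for every pair of distinct points u, v ∈ X ∪ Y: d_{X∪Y,p}(u,v) ≤ ε if and only if u ∈ X, v ∈ X, and d_{X,p}(u,v) ≤ ε. Consequently, for every scale ε < δ^p, a finite subset σ ⊆ X ∪ Y with at least two elements has all pairwise d_{X∪Y,p}-distances at most ε if and only if σ ⊆ X and all pairwise d_{X,p}-distances in σ are at most ε (i.e., the Vietoris–Rips complex of (X∪Y, d_{X∪Y,p}) at scale ε equals that of (X, d_{X,p}) together with the points of Y as isolated vertices). -/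

import Mathlib

/-- The cost of a polygonal path given by the list `l` of its vertices:
the sum over consecutive pairs of the `p`-th power of the Euclidean distance. -/
noncomputable def chainCost {D : ℕ} (p : ℝ) (l : List (EuclideanSpace ℝ (Fin D))) : ℝ :=
  ((l.zip l.tail).map (fun q => dist q.1 q.2 ^ p)).sum

/-- The sample Fermat distance: `d_{S,p}(x,y)` is the infimum over all finite paths
`x = x₀, x₁, …, x_{r+1} = y` with interior points `x₁,…,x_r ∈ S` of
`Σ_{i=0}^{r} |x_{i+1} − x_i|^p`. -/
noncomputable def fermatDist {D : ℕ} (p : ℝ) (S : Finset (EuclideanSpace ℝ (Fin D)))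
    (x y : EuclideanSpace ℝ (Fin D)) : ℝ :=
  sInf {c : ℝ | ∃ l : List (EuclideanSpace ℝ (Fin D)),
    (∀ z ∈ l, z ∈ S) ∧ c = chainCost p (x :: (l ++ [y]))}

/-- The Euclidean distance `d_E(A,B) = min_{a ∈ A, b ∈ B} |a − b|` between finite sets. -/
noncomputable def setDistE {D : ℕ} (A B : Finset (EuclideanSpace ℝ (Fin D))) : ℝ :=
  sInf {d : ℝ | ∃ a ∈ A, ∃ b ∈ B, d = dist a b}

/-- The minimal spacing `κ(B) = min_{b ∈ B} d_E({b}, B∖{b})` of a finite set. -/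
noncomputable def minSpacing {D : ℕ} (B : Finset (EuclideanSpace ℝ (Fin D))) : ℝ :=
  sInf {d : ℝ | ∃ b ∈ B, ∃ b' ∈ B, b ≠ b' ∧ d = dist b b'}
noncomputable instance {D : ℕ} : DecidableEq (EuclideanSpace ℝ (Fin D)) := Classical.decEq _
section Aux
variable {D : ℕ}

def costSet (p : ℝ) (S : Finset (EuclideanSpace ℝ (Fin D)))
    (x y : EuclideanSpace ℝ (Fin D)) : Set ℝ :=
  {c : ℝ | ∃ l : List (EuclideanSpace ℝ (Fin D)),
    (∀ z ∈ l, z ∈ S) ∧ c = chainCost p (x :: (l ++ [y]))}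

lemma fermatDist_def (p : ℝ) (S : Finset (EuclideanSpace ℝ (Fin D)))
    (x y : EuclideanSpace ℝ (Fin D)) : fermatDist p S x y = sInf (costSet p S x y) := rfl

lemma chainCost_nonneg (p : ℝ) (l : List (EuclideanSpace ℝ (Fin D))) : 0 ≤ chainCost p l := by
  apply List.sum_nonneg
  intro x hx
  simp only [List.mem_map] at hx
  obtain ⟨q, -, rfl⟩ := hx
  exact Real.rpow_nonneg dist_nonneg p

lemma chainCost_cons_cons (p : ℝ) (a b : EuclideanSpace ℝ (Fin D))
    (M : List (EuclideanSpace ℝ (Fin D))) :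
    chainCost p (a :: b :: M) = dist a b ^ p + chainCost p (b :: M) := by
  simp [chainCost]

lemma costSet_bdd (p : ℝ) (S : Finset (EuclideanSpace ℝ (Fin D)))
    (x y : EuclideanSpace ℝ (Fin D)) : BddBelow (costSet p S x y) := by
  refine ⟨0, ?_⟩
  rintro c ⟨l, -, rfl⟩
  exact chainCost_nonneg _ _

lemma costSet_nonempty (p : ℝ) (S : Finset (EuclideanSpace ℝ (Fin D)))
    (x y : EuclideanSpace ℝ (Fin D)) : (costSet p S x y).Nonempty :=
  ⟨chainCost p (x :: ([] ++ [y])), [], fun z hz => absurd hz (List.not_mem_nil), rfl⟩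

lemma fermatDist_mono (p : ℝ) {S T : Finset (EuclideanSpace ℝ (Fin D))} (hST : S ⊆ T)
    (x y : EuclideanSpace ℝ (Fin D)) : fermatDist p T x y ≤ fermatDist p S x y := by
  rw [fermatDist_def, fermatDist_def]
  refine csInf_le_csInf (costSet_bdd p T x y) (costSet_nonempty p S x y) ?_
  rintro c ⟨l, hl, rfl⟩
  exact ⟨l, fun z hz => hST (hl z hz), rfl⟩

lemma fermatDist_self_le (p : ℝ) (hpne : p ≠ 0) (S : Finset (EuclideanSpace ℝ (Fin D)))
    (x : EuclideanSpace ℝ (Fin D)) : fermatDist p S x x ≤ 0 := by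
  rw [fermatDist_def]
  have h0 : (0 : ℝ) ∈ costSet p S x x := by
    refine ⟨[], fun z hz => absurd hz (List.not_mem_nil), ?_⟩
    simp [chainCost, Real.zero_rpow hpne]
  exact csInf_le (costSet_bdd p S x x) h0

lemma delta_nonneg (X Y : Finset (EuclideanSpace ℝ (Fin D))) :
    0 ≤ min (minSpacing Y) (setDistE X Y) := by
  refine le_min (Real.sInf_nonneg ?_) (Real.sInf_nonneg ?_)
  · rintro d ⟨b, -, b', -, -, rfl⟩; exact dist_nonneg
  · rintro d ⟨a, -, b, -, rfl⟩; exact dist_nonneg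

lemma dist_lb {X Y : Finset (EuclideanSpace ℝ (Fin D))}
    {a b : EuclideanSpace ℝ (Fin D)} (ha : a ∈ X ∪ Y) (hb : b ∈ Y) (hab : a ≠ b) :
    min (minSpacing Y) (setDistE X Y) ≤ dist a b := by
  rcases Finset.mem_union.1 ha with haX | haY
  · refine (min_le_right _ _).trans (csInf_le ⟨0, ?_⟩ ⟨a, haX, b, hb, rfl⟩)
    rintro d ⟨a', -, b', -, rfl⟩; exact dist_nonneg
  · refine (min_le_left _ _).trans (csInf_le ⟨0, ?_⟩ ⟨a, haY, b, hb, hab, rfl⟩)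
    rintro d ⟨a', -, b', -, -, rfl⟩; exact dist_nonneg

lemma dist_lb' {X Y : Finset (EuclideanSpace ℝ (Fin D))}
    {a b : EuclideanSpace ℝ (Fin D)} (ha : a ∈ Y) (hb : b ∈ X ∪ Y) (hab : a ≠ b) :
    min (minSpacing Y) (setDistE X Y) ≤ dist a b := by
  rw [dist_comm]
  exact dist_lb hb ha hab.symm

variable {p : ℝ} {X Y : Finset (EuclideanSpace ℝ (Fin D))}

lemma cross_head (hp0 : 0 ≤ p) :
    ∀ (L : List (EuclideanSpace ℝ (Fin D))) (a : EuclideanSpace ℝ (Fin D)), a ∈ Y →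
    (∀ z ∈ L, z ∈ X ∪ Y) → (∃ z ∈ L, z ≠ a) →
    min (minSpacing Y) (setDistE X Y) ^ p ≤ chainCost p (a :: L) := by
  intro L
  induction L with
  | nil => rintro a _ _ ⟨z, hz, -⟩; exact absurd hz (List.not_mem_nil)
  | cons b L ih =>
    intro a ha hall hex
    rw [chainCost_cons_cons]
    by_cases hba : b = a
    · subst hba
      obtain ⟨z, hz, hzb⟩ := hex
      have hz' : z ∈ L := by
        rcases List.mem_cons.1 hz with h | h
        · exact absurd h hzb
        · exact h
      have := ih b ha (fun w hw => hall w (List.mem_cons_of_mem _ hw)) ⟨z, hz', hzb⟩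
      have h0 : (0:ℝ) ≤ dist b b ^ p := Real.rpow_nonneg dist_nonneg p
      linarith
    · have h1 : min (minSpacing Y) (setDistE X Y) ≤ dist a b :=
        dist_lb' ha (hall b (List.mem_cons_self)) (fun h => hba h.symm)
      have h2 : min (minSpacing Y) (setDistE X Y) ^ p ≤ dist a b ^ p :=
        Real.rpow_le_rpow (delta_nonneg X Y) h1 hp0
      have h3 := chainCost_nonneg p (b :: L)
      linarith

lemma cross_mid (hp0 : 0 ≤ p) (hdisj : Disjoint X Y) :
    ∀ (L : List (EuclideanSpace ℝ (Fin D))) (a : EuclideanSpace ℝ (Fin D)), a ∈ X →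
    (∀ z ∈ L, z ∈ X ∪ Y) → (∃ z ∈ L, z ∈ Y) →
    min (minSpacing Y) (setDistE X Y) ^ p ≤ chainCost p (a :: L) := by
  intro L
  induction L with
  | nil => rintro a _ _ ⟨z, hz, -⟩; exact absurd hz (List.not_mem_nil)
  | cons b L ih =>
    intro a ha hall hex
    rw [chainCost_cons_cons]
    by_cases hbY : b ∈ Y
    · have hab : a ≠ b := fun h => (Finset.disjoint_left.1 hdisj ha) (h ▸ hbY)
      have h1 : min (minSpacing Y) (setDistE X Y) ≤ dist a b :=
        dist_lb (Finset.mem_union_left _ ha) hbY hab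
      have h2 : min (minSpacing Y) (setDistE X Y) ^ p ≤ dist a b ^ p :=
        Real.rpow_le_rpow (delta_nonneg X Y) h1 hp0
      have h3 := chainCost_nonneg p (b :: L)
      linarith
    · have hbX : b ∈ X := by
        rcases Finset.mem_union.1 (hall b (List.mem_cons_self)) with h | h
        · exact h
        · exact absurd h hbY
      obtain ⟨z, hz, hzY⟩ := hex
      have hz' : z ∈ L := by
        rcases List.mem_cons.1 hz with h | h
        · exact absurd (h ▸ hzY) hbY
        · exact h
      have := ih b hbX (fun w hw => hall w (List.mem_cons_of_mem _ hw)) ⟨z, hz', hzY⟩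
      have h0 : (0:ℝ) ≤ dist a b ^ p := Real.rpow_nonneg dist_nonneg p
      linarith

lemma cross_last (hp0 : 0 ≤ p) :
    ∀ (L : List (EuclideanSpace ℝ (Fin D))) (b : EuclideanSpace ℝ (Fin D)), b ∈ Y →
    (∀ z ∈ L, z ∈ X ∪ Y) → (∃ z ∈ L, z ≠ b) →
    min (minSpacing Y) (setDistE X Y) ^ p ≤ chainCost p (L ++ [b]) := by
  intro L
  induction L with
  | nil => rintro b _ _ ⟨z, hz, -⟩; exact absurd hz (List.not_mem_nil)
  | cons a L ih =>
    intro b hb hall hex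
    have hallL : ∀ z ∈ L, z ∈ X ∪ Y := fun w hw => hall w (List.mem_cons_of_mem _ hw)
    by_cases hL : ∃ z ∈ L, z ≠ b
    · obtain ⟨c, M, hLM⟩ : ∃ c M, L ++ [b] = c :: M := by
        cases L with
        | nil => exact ⟨b, [], rfl⟩
        | cons c L' => exact ⟨c, L' ++ [b], rfl⟩
      have hrec : chainCost p ((a :: L) ++ [b]) = dist a c ^ p + chainCost p (L ++ [b]) := by
        rw [List.cons_append, hLM, chainCost_cons_cons, ← hLM]
      rw [hrec]
      have := ih b hb hallL hL
      have h0 : (0:ℝ) ≤ dist a c ^ p := Real.rpow_nonneg dist_nonneg p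
      linarith
    · push_neg at hL
      have hab : a ≠ b := by
        obtain ⟨z, hz, hzb⟩ := hex
        rcases List.mem_cons.1 hz with h | h
        · exact h ▸ hzb
        · exact absurd (hL z h) hzb
      obtain ⟨M, hM⟩ : ∃ M, L ++ [b] = b :: M := by
        cases L with
        | nil => exact ⟨[], rfl⟩
        | cons c L' => exact ⟨L' ++ [b], by simp [hL c (List.mem_cons_self)]⟩
      have hrec : chainCost p ((a :: L) ++ [b]) = dist a b ^ p + chainCost p (L ++ [b]) := by
        rw [List.cons_append, hM, chainCost_cons_cons, ← hM]
      rw [hrec]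
      have h1 : min (minSpacing Y) (setDistE X Y) ≤ dist a b :=
        dist_lb (hall a (List.mem_cons_self)) hb hab
      have h2 : min (minSpacing Y) (setDistE X Y) ^ p ≤ dist a b ^ p :=
        Real.rpow_le_rpow (delta_nonneg X Y) h1 hp0
      have h3 := chainCost_nonneg p (L ++ [b])
      linarith

lemma cost_lb (hp0 : 0 ≤ p) (hdisj : Disjoint X Y)
    {u v : EuclideanSpace ℝ (Fin D)} (hu : u ∈ X ∪ Y) (hv : v ∈ X ∪ Y) (huv : u ≠ v)
    {l : List (EuclideanSpace ℝ (Fin D))} (hl : ∀ z ∈ l, z ∈ X ∪ Y)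
    (ht : u ∈ Y ∨ v ∈ Y ∨ ∃ z ∈ l, z ∈ Y) :
    min (minSpacing Y) (setDistE X Y) ^ p ≤ chainCost p (u :: (l ++ [v])) := by
  have hallL : ∀ z ∈ l ++ [v], z ∈ X ∪ Y := by
    intro z hz
    rcases List.mem_append.1 hz with h | h
    · exact hl z h
    · rw [List.mem_singleton.1 h]; exact hv
  by_cases huY : u ∈ Y
  · exact cross_head hp0 (l ++ [v]) u huY hallL
      ⟨v, List.mem_append_right _ (List.mem_singleton_self _), huv.symm⟩
  by_cases hvY : v ∈ Y
  · have : u :: (l ++ [v]) = (u :: l) ++ [v] := rfl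
    rw [this]
    refine cross_last hp0 (u :: l) v hvY ?_ ⟨u, List.mem_cons_self, huv⟩
    intro z hz
    rcases List.mem_cons.1 hz with h | h
    · exact h ▸ hu
    · exact hl z h
  · rcases ht with h | h | ⟨z, hz, hzY⟩
    · exact absurd h huY
    · exact absurd h hvY
    have huX : u ∈ X := by
      rcases Finset.mem_union.1 hu with h | h
      · exact h
      · exact absurd h huY
    exact cross_mid hp0 hdisj (l ++ [v]) u huX hallL ⟨z, List.mem_append_left _ hz, hzY⟩

end Aux

/-- for `0 < ε < δ^p` with `δ = min{κ(Y), d_E(X,Y)}`, two distinct points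
of `X ∪ Y` are at sample Fermat distance at most `ε` iff both lie in `X` and their
sample Fermat distance in `X` is at most `ε`; consequently, at scale `ε` the
Vietoris–Rips complex of `(X ∪ Y, d_{X∪Y,p})` equals that of `(X, d_{X,p})` together
with the points of `Y` as isolated vertices. -/
theorem fermatDist_rips_eq {D : ℕ} (p : ℝ) (hp : 1 < p)
    (X Y : Finset (EuclideanSpace ℝ (Fin D)))
    (hX : X.Nonempty) (hY : Y.Nonempty) (hdisj : Disjoint X Y)
    (ε : ℝ) (hε₀ : 0 < ε) (hε : ε < min (minSpacing Y) (setDistE X Y) ^ p) :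
    (∀ u ∈ X ∪ Y, ∀ v ∈ X ∪ Y, u ≠ v →
      (fermatDist p (X ∪ Y) u v ≤ ε ↔ u ∈ X ∧ v ∈ X ∧ fermatDist p X u v ≤ ε)) ∧
    (∀ σ : Finset (EuclideanSpace ℝ (Fin D)), σ ⊆ X ∪ Y → 2 ≤ σ.card →
      ((∀ u ∈ σ, ∀ v ∈ σ, fermatDist p (X ∪ Y) u v ≤ ε) ↔
        (σ ⊆ X ∧ ∀ u ∈ σ, ∀ v ∈ σ, fermatDist p X u v ≤ ε))) := by
  have hp0 : (0:ℝ) ≤ p := by linarith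
  have hpne : p ≠ 0 := by intro h; rw [h] at hp; exact absurd hp (by norm_num)
  have main : ∀ u ∈ X ∪ Y, ∀ v ∈ X ∪ Y, u ≠ v →
      (fermatDist p (X ∪ Y) u v ≤ ε ↔ u ∈ X ∧ v ∈ X ∧ fermatDist p X u v ≤ ε) := by
    intro u hu v hv huv
    constructor
    · intro h
      have hne := costSet_nonempty p (X ∪ Y) u v
      have hXmem : u ∈ X ∧ v ∈ X := by
        by_contra hcon
        have htouch : u ∈ Y ∨ v ∈ Y := by
          rcases Finset.mem_union.1 hu with h1 | h1 <;>
            rcases Finset.mem_union.1 hv with h2 | h2 <;> tauto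
        have hlb : min (minSpacing Y) (setDistE X Y) ^ p ≤ fermatDist p (X ∪ Y) u v := by
          rw [fermatDist_def]
          refine le_csInf hne ?_
          rintro c ⟨l, hl, rfl⟩
          exact cost_lb hp0 hdisj hu hv huv hl (htouch.imp id Or.inl)
        linarith
      refine ⟨hXmem.1, hXmem.2, ?_⟩
      by_contra hcon
      push_neg at hcon
      set δp := min (minSpacing Y) (setDistE X Y) ^ p with hδp
      have hsb : fermatDist p (X ∪ Y) u v < min (fermatDist p X u v) ((ε + δp)/2) :=
        lt_min (lt_of_le_of_lt h hcon) (by linarith)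
      rw [fermatDist_def] at hsb
      obtain ⟨c, ⟨l, hl, rfl⟩, hcb⟩ := exists_lt_of_csInf_lt hne hsb
      have hlX : ∀ z ∈ l, z ∈ X := by
        intro z hz
        rcases Finset.mem_union.1 (hl z hz) with hzX | hzY
        · exact hzX
        · have h1 := cost_lb hp0 hdisj hu hv huv hl (Or.inr (Or.inr ⟨z, hz, hzY⟩))
          have h2 : min (fermatDist p X u v) ((ε + δp)/2) ≤ (ε + δp)/2 := min_le_right _ _
          linarith
      have hXle : fermatDist p X u v ≤ chainCost p (u :: (l ++ [v])) := by
        rw [fermatDist_def]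
        exact csInf_le (costSet_bdd p X u v) ⟨l, hlX, rfl⟩
      have h3 : min (fermatDist p X u v) ((ε + δp)/2) ≤ fermatDist p X u v := min_le_left _ _
      linarith
    · rintro ⟨huX, hvX, hd⟩
      exact le_trans (fermatDist_mono p Finset.subset_union_left u v) hd
  refine ⟨main, fun σ hσ hcard => ?_⟩
  constructor
  · intro h
    have hσX : σ ⊆ X := by
      intro u hu
      obtain ⟨v, hv, hvu⟩ := Finset.exists_mem_ne (s := σ) (by omega) u
      exact ((main u (hσ hu) v (hσ hv) (Ne.symm hvu)).mp (h u hu v hv)).1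
    refine ⟨hσX, fun u hu v hv => ?_⟩
    by_cases huv : u = v
    · subst huv
      exact le_trans (fermatDist_self_le p hpne X u) (le_of_lt hε₀)
    · exact ((main u (hσ hu) v (hσ hv) huv).mp (h u hu v hv)).2.2
  · rintro ⟨hσX, h⟩ u hu v hv
    exact le_trans (fermatDist_mono p Finset.subset_union_left u v) (h u hu v hv)
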